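/- Let λ, μ_1, μ_2 > 0 with μ_1 ≠ μ_2, and set c = μ_1(λ+μ_2)/(μ_2(λ+μ_1)). For λ_1 ∈ (0, λ) and λ_2 = λ − λ_1, the stationarity condition of the heterogeneous two-server AoI Δ(λ_1) = 1/(μ_1+μ_2) + 1/λ + (1/((μ_1+μ_2)λ)) (μ_1λ_2/(λ_1+μ_2) + μ_2λ_1/(λ_2+μ_1)), i.e. Δ'(λ_1) = 0, is equivalent to the quadratic equation (1−c)λ_1² + 2λ_1(μ_2 + c(λ+μ_1)) + μ_2² − c(λ+μ_1)² = 0. -/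

import Mathlib

/-- The stationarity condition `Δ'(λ₁) = 0` for the heterogeneous two-server AoI is
equivalent to the quadratic equation
`(1−c)λ₁² + 2λ₁(μ₂ + c(λ+μ₁)) + μ₂² − c(λ+μ₁)² = 0`. -/
theorem stmt_15 (lam m1 m2 : ℝ) (hl : 0 < lam) (hm1 : 0 < m1) (hm2 : 0 < m2)
    (hne : m1 ≠ m2) (c : ℝ) (hc : c = m1 * (lam + m2) / (m2 * (lam + m1)))
    (Delta : ℝ → ℝ)
    (hDelta : ∀ x, Delta x = 1 / (m1 + m2) + 1 / lam
        + (1 / ((m1 + m2) * lam)) * (m1 * (lam - x) / (x + m2) + m2 * x / (lam - x + m1)))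
    (l1 : ℝ) (hl1 : 0 < l1) (hl1' : l1 < lam) :
    deriv Delta l1 = 0 ↔
      (1 - c) * l1 ^ 2 + 2 * l1 * (m2 + c * (lam + m1)) + m2 ^ 2 - c * (lam + m1) ^ 2
        = 0 := by
  have hx2 : l1 + m2 ≠ 0 := by positivity
  have hx1pos : 0 < lam - l1 + m1 := by linarith
  have hx1 : lam - l1 + m1 ≠ 0 := ne_of_gt hx1pos
  have hA : HasDerivAt (fun x : ℝ => m1 * (lam - x)) (-m1) l1 := by
    simpa using ((hasDerivAt_id l1).const_sub lam).const_mul m1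
  have hB : HasDerivAt (fun x : ℝ => x + m2) 1 l1 := (hasDerivAt_id l1).add_const m2
  have h1 : HasDerivAt (fun x : ℝ => m1 * (lam - x) / (x + m2))
      (-(m1 * (lam + m2)) / (l1 + m2) ^ 2) l1 := by
    have : HasDerivAt (fun x : ℝ => m1 * (lam - x) / (x + m2)) _ l1 := hA.div hB hx2
    convert this using 1
    congr 1
    ring
  have hC : HasDerivAt (fun x : ℝ => m2 * x) m2 l1 := by
    simpa using (hasDerivAt_id l1).const_mul m2
  have hD : HasDerivAt (fun x : ℝ => lam - x + m1) (-1) l1 := by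
    simpa using ((hasDerivAt_id l1).const_sub lam).add_const m1
  have h2 : HasDerivAt (fun x : ℝ => m2 * x / (lam - x + m1))
      (m2 * (lam + m1) / (lam - l1 + m1) ^ 2) l1 := by
    have : HasDerivAt (fun x : ℝ => m2 * x / (lam - x + m1)) _ l1 := hC.div hD hx1
    convert this using 1
    congr 1
    ring
  have hfun : Delta = fun x => 1 / (m1 + m2) + 1 / lam
      + (1 / ((m1 + m2) * lam)) * (m1 * (lam - x) / (x + m2) + m2 * x / (lam - x + m1)) :=
    funext hDelta
  have hDer : HasDerivAt Delta
      ((1 / ((m1 + m2) * lam)) *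
        (-(m1 * (lam + m2)) / (l1 + m2) ^ 2 + m2 * (lam + m1) / (lam - l1 + m1) ^ 2)) l1 := by
    rw [hfun]
    exact ((h1.add h2).const_mul _).const_add _
  rw [hDer.deriv, hc]
  constructor
  · intro h
    field_simp at h
    field_simp
    nlinarith [h]
  · intro h
    field_simp at h
    field_simp
    nlinarith [h]
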